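/- Let ν be a compactly supported probability measure on ℝ with barycenter zero (∫ λ dν = 0), and let λ_max = max(supp ν). Fix n ≥ 1 and assume the function f(λ) := ν{x ≥ λ}^{1/n} is concave on (−∞, λ_max). Then (2 n^n/(n+1)^{n+1}) λ_max ≤ ∫ |λ| dν ≤ 2 λ_max. -/

import Mathlib

open MeasureTheory Set

lemma pow_sub_pow_le_aux (k : ℕ) {q r : ℝ} (hq : 0 ≤ q) (hqr : q ≤ r) (hr : r ≤ 1) :
    r ^ k - q ^ k ≤ k * (r - q) := by
  induction k with
  | zero => simp
  | succ k ih =>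
    have h1 : 0 ≤ r ^ k - q ^ k := sub_nonneg.2 (pow_le_pow_left₀ hq hqr k)
    have h2 : q ^ k ≤ 1 := pow_le_one₀ hq (hqr.trans hr)
    have hr0 : 0 ≤ r := hq.trans hqr
    have h3 : r ^ (k + 1) - q ^ (k + 1) = r * (r ^ k - q ^ k) + q ^ k * (r - q) := by ring
    push_cast
    nlinarith [sub_nonneg.2 hqr]

lemma key_scalar (n : ℕ) (hn : 1 ≤ n) {q : ℝ} (hq : 0 < q)
    (hqr : q ≤ (n : ℝ) / ((n : ℝ) + 1)) :
    (n : ℝ) + 1 + (n : ℝ) ^ n / ((n : ℝ) + 1) ^ n ≤ (n : ℝ) / q + q ^ n := by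
  have hn1 : (0 : ℝ) < (n : ℝ) + 1 := by positivity
  have hnpos : (0 : ℝ) < (n : ℝ) := by exact_mod_cast hn
  set r : ℝ := (n : ℝ) / ((n : ℝ) + 1) with hrdef
  have hrpos : 0 < r := by positivity
  have hr1 : r ≤ 1 := by rw [hrdef, div_le_one hn1]; linarith
  have hq1 : q ≤ 1 := hqr.trans hr1
  have hpow : r ^ n - q ^ n ≤ n * (r - q) := pow_sub_pow_le_aux n hq.le hqr hr1
  have hqrle : q * r ≤ 1 := by nlinarith
  have hfrac : (r - q) ≤ (r - q) / (q * r) := by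
    rw [le_div_iff₀ (by positivity)]
    nlinarith [sub_nonneg.2 hqr]
  have hdiv : (n : ℝ) / q - (n : ℝ) / r = (n : ℝ) * ((r - q) / (q * r)) := by
    field_simp
  have hnr : (n : ℝ) / r = (n : ℝ) + 1 := by
    rw [hrdef]
    field_simp
  have hrn : r ^ n = (n : ℝ) ^ n / ((n : ℝ) + 1) ^ n := by rw [hrdef, div_pow]
  nlinarith [mul_le_mul_of_nonneg_left hfrac hnpos.le]

lemma integrableOn_aux {f : ℝ → ℝ} (hf : Antitone f) (h01 : ∀ t, f t ≤ 1)
    (hnn : ∀ t, 0 ≤ f t) {K : ℝ} (hK0 : 0 ≤ K) (hK : ∀ t, K < t → f t = 0) :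
    IntegrableOn f (Set.Ioi 0) volume := by
  have hmeas : Measurable f := hf.measurable
  have h1 : IntegrableOn f (Set.Ioc 0 K) volume := by
    refine Integrable.mono' (g := fun _ => (1 : ℝ))
      (integrableOn_const (lt_top_iff_ne_top.1 ?_)) hmeas.aestronglyMeasurable.restrict
      (Filter.Eventually.of_forall fun t => ?_)
    · rw [Real.volume_Ioc]; exact ENNReal.ofReal_lt_top
    · rw [Real.norm_eq_abs, abs_of_nonneg (hnn t)]; exact h01 t
  have h2 : IntegrableOn f (Set.Ioi K) volume := by
    refine (integrableOn_zero).congr_fun (fun t ht => (hK t ht).symm) measurableSet_Ioi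
  rw [← Set.Ioc_union_Ioi_eq_Ioi hK0]
  exact h1.union h2

set_option maxHeartbeats 1000000 in
/-- Let `ν` be a compactly supported probability measure on `ℝ` with
barycenter zero, and `λmax = max (supp ν)` (encoded by: `ν` gives no mass above `λmax`,
gives positive mass to every `(λmax − ε, ∞)`, and has support bounded below).  Fix
`n ≥ 1` and assume `λ ↦ ν[λ,∞)^{1/n}` is concave on `(−∞, λmax)`.  Then
`(2 nⁿ/(n+1)^{n+1}) λmax ≤ ∫ |λ| dν ≤ 2 λmax`. -/
theorem duistermaat_heckman_L1_J_comparison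
    (n : ℕ) (hn : 1 ≤ n)
    (ν : Measure ℝ) [IsProbabilityMeasure ν] (lammax : ℝ)
    (h_upper : ν (Set.Ioi lammax) = 0)
    (h_max : ∀ ε : ℝ, 0 < ε → 0 < ν (Set.Ioi (lammax - ε)))
    (h_lower : ∃ a : ℝ, ν (Set.Iio a) = 0)
    (hbar : ∫ x, x ∂ν = 0)
    (hconc : ConcaveOn ℝ (Set.Iio lammax)
      (fun lam => (ν (Set.Ici lam)).toReal ^ (1 / (n : ℝ)))) :
    2 * (n : ℝ) ^ n / ((n : ℝ) + 1) ^ (n + 1) * lammax ≤ ∫ x, |x| ∂ν ∧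
    ∫ x, |x| ∂ν ≤ 2 * lammax := by
  obtain ⟨a₁, ha₁⟩ := h_lower
  set a₀ : ℝ := min a₁ 0 with ha₀def
  have ha₀ : ν (Set.Iio a₀) = 0 :=
    measure_mono_null (Set.Iio_subset_Iio (min_le_left _ _)) ha₁
  have ha₀0 : a₀ ≤ 0 := min_le_right _ _
  have hn1 : (0 : ℝ) < (n : ℝ) + 1 := by positivity
  have hnR : (1 : ℝ) ≤ (n : ℝ) := by exact_mod_cast hn
  -- a.e. bounds
  have h_ae_le : ∀ᵐ x ∂ν, x ≤ lammax := by
    have hs : {x : ℝ | ¬ x ≤ lammax} = Set.Ioi lammax := by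
      ext x; simp [Set.mem_Ioi, not_le]
    rw [ae_iff, hs, h_upper]
  have h_ae_ge : ∀ᵐ x ∂ν, a₀ ≤ x := by
    have hs : {x : ℝ | ¬ a₀ ≤ x} = Set.Iio a₀ := by
      ext x; simp [Set.mem_Iio, not_le]
    rw [ae_iff, hs, ha₀]
  -- integrability
  have hInt : Integrable (fun x : ℝ => x) ν := by
    refine Integrable.mono' (integrable_const (|a₀| + |lammax|))
      measurable_id.aestronglyMeasurable ?_
    filter_upwards [h_ae_le, h_ae_ge] with x h1 h2
    rw [Real.norm_eq_abs]
    refine abs_le.2 ⟨?_, ?_⟩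
    · have := neg_abs_le a₀; have := abs_nonneg lammax; linarith
    · have := le_abs_self lammax; have := abs_nonneg a₀; linarith
  have hP : Integrable (fun x : ℝ => max x 0) ν := hInt.pos_part
  have hN : Integrable (fun x : ℝ => max (-x) 0) ν := hInt.neg.pos_part
  have hm0 : 0 ≤ lammax := by
    have h := integral_mono_ae hInt (integrable_const lammax) h_ae_le
    rw [hbar] at h
    simpa using h
  set P : ℝ := ∫ x, max x 0 ∂ν with hPdef
  set N : ℝ := ∫ x, max (-x) 0 ∂ν with hNdef
  have habs_eq : (∫ x, |x| ∂ν) = P + N := by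
    rw [hPdef, hNdef, ← integral_add hP hN]
    refine integral_congr_ae (Filter.Eventually.of_forall fun x => ?_)
    rcases le_total 0 x with h | h
    · simp [abs_of_nonneg h, max_eq_left h, max_eq_right (neg_nonpos.2 h)]
    · simp [abs_of_nonpos h, max_eq_right h, max_eq_left (neg_nonneg.2 h)]
  have hPN : P = N := by
    have h1 : (∫ x, (max x 0 - max (-x) 0) ∂ν) = P - N := integral_sub hP hN
    have h2 : (∫ x, (max x 0 - max (-x) 0) ∂ν) = 0 := by
      have hfun : (fun x : ℝ => max x 0 - max (-x) 0) = fun x : ℝ => x := by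
        funext x
        rcases le_total 0 x with h | h
        · simp [max_eq_left h, max_eq_right (neg_nonpos.2 h)]
        · simp [max_eq_right h, max_eq_left (neg_nonneg.2 h)]
      rw [hfun, hbar]
    linarith [h1.symm.trans h2]
  have hP0 : 0 ≤ P := integral_nonneg fun x => le_max_right _ _
  have hPle : P ≤ lammax := by
    have h := integral_mono_ae hP (integrable_const lammax) ?_
    · simpa using h
    · filter_upwards [h_ae_le] with x hx
      exact max_le hx hm0
  have hle1 : ∀ s : Set ℝ, (ν s).toReal ≤ 1 := fun s => by
    simpa using ENNReal.toReal_mono ENNReal.one_ne_top prob_le_one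
  -- layer cake representations
  have hPlc : P = ∫ t in Set.Ioi (0 : ℝ), (ν (Set.Ioi t)).toReal := by
    rw [hPdef, hP.integral_eq_integral_meas_lt
      (Filter.Eventually.of_forall fun x => le_max_right x 0)]
    refine setIntegral_congr_fun measurableSet_Ioi fun t ht => ?_
    have ht' : ¬(t < 0) := not_lt.2 (le_of_lt ht)
    have hset : {a : ℝ | t < max a 0} = Set.Ioi t := by
      ext x; simp [lt_max_iff, ht', Set.mem_Ioi]
    rw [hset]; rfl
  have hNlc : N = ∫ t in Set.Ioi (0 : ℝ), (ν (Set.Iio (-t))).toReal := by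
    rw [hNdef, hN.integral_eq_integral_meas_lt
      (Filter.Eventually.of_forall fun x => le_max_right _ 0)]
    refine setIntegral_congr_fun measurableSet_Ioi fun t ht => ?_
    have ht' : ¬(t < 0) := not_lt.2 (le_of_lt ht)
    have hset : {a : ℝ | t < max (-a) 0} = Set.Iio (-t) := by
      ext x; simp [lt_max_iff, ht', Set.mem_Iio, lt_neg]
    rw [hset]; rfl
  have hIntP' : IntegrableOn (fun t => (ν (Set.Ioi t)).toReal) (Set.Ioi 0) volume := by
    refine integrableOn_aux ?_ (fun t => hle1 _) (fun t => ENNReal.toReal_nonneg) hm0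
      (fun t ht => ?_)
    · intro s t hst
      exact ENNReal.toReal_mono (measure_ne_top ν _) (measure_mono (Set.Ioi_subset_Ioi hst))
    · rw [measure_mono_null (Set.Ioi_subset_Ioi ht.le) h_upper, ENNReal.toReal_zero]
  have hIntN' : IntegrableOn (fun t => (ν (Set.Iio (-t))).toReal) (Set.Ioi 0) volume := by
    refine integrableOn_aux ?_ (fun t => hle1 _) (fun t => ENNReal.toReal_nonneg)
      (K := -a₀) (by linarith) (fun t ht => ?_)
    · intro s t hst
      refine ENNReal.toReal_mono (measure_ne_top ν _) (measure_mono (Set.Iio_subset_Iio ?_))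
      linarith
    · rw [measure_mono_null (Set.Iio_subset_Iio (by linarith)) ha₀, ENNReal.toReal_zero]
  -- the main bound for every b < lammax
  have key : ∀ b : ℝ, 0 < b → b < lammax →
      (n : ℝ) ^ n / ((n : ℝ) + 1) ^ (n + 1) * b ≤ P := by
    intro b hb0 hbm
    have hm : 0 < lammax := lt_trans hb0 hbm
    have hnn0 : (n : ℝ) ≠ 0 := by positivity
    set g : ℝ → ℝ := fun lam => (ν (Set.Ici lam)).toReal ^ (1 / (n : ℝ)) with hgdef
    have hgpow : ∀ lam : ℝ, g lam ^ n = (ν (Set.Ici lam)).toReal := by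
      intro lam
      rw [hgdef]
      rw [← Real.rpow_natCast ((ν (Set.Ici lam)).toReal ^ (1 / (n : ℝ))) n,
        ← Real.rpow_mul ENNReal.toReal_nonneg, one_div, inv_mul_cancel₀ hnn0, Real.rpow_one]
    have hg_nn : ∀ lam : ℝ, 0 ≤ g lam := fun lam => Real.rpow_nonneg ENNReal.toReal_nonneg _
    have hF0pos : 0 < (ν (Set.Ici 0)).toReal := by
      have h0 : 0 < ν (Set.Ioi (0 : ℝ)) := by
        have := h_max lammax hm
        rwa [sub_self] at this
      refine ENNReal.toReal_pos ?_ (measure_ne_top ν _)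
      exact fun h => (measure_mono_null Set.Ioi_subset_Ici_self h ▸ h0).false
    set q : ℝ := g 0 with hqdef
    have hq0 : 0 < q := Real.rpow_pos_of_pos hF0pos _
    have hq1 : q ≤ 1 := Real.rpow_le_one ENNReal.toReal_nonneg (hle1 _) (by positivity)
    have h0mem : (0 : ℝ) ∈ Set.Iio lammax := hm
    have hbmem : b ∈ Set.Iio lammax := hbm
    -- chord bound on the positive side
    have hchord_pos : ∀ t' : ℝ, 0 < t' → t' < b → q * (1 - t' / b) ≤ g t' := by
      intro t' ht'0 ht'b
      have hc1 : (0 : ℝ) ≤ 1 - t' / b := by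
        rw [sub_nonneg, div_le_one hb0]
        exact ht'b.le
      have hc2 : (0 : ℝ) ≤ t' / b := by positivity
      have := hconc.2 h0mem hbmem hc1 hc2 (by ring)
      simp only [smul_eq_mul, mul_zero, zero_add] at this
      rw [div_mul_cancel₀ _ (ne_of_gt hb0)] at this
      have hgb : 0 ≤ t' / b * g b := mul_nonneg hc2 (hg_nn b)
      calc q * (1 - t' / b) = (1 - t' / b) * g 0 := by rw [← hqdef]; ring
        _ ≤ (1 - t' / b) * g 0 + t' / b * g b := by linarith
        _ ≤ g t' := this
    -- chord bound on the negative side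
    have hchord_neg : ∀ t : ℝ, 0 ≤ t → g (-t) ≤ q * ((b + t) / b) := by
      intro t ht0
      have hbt : 0 < b + t := by linarith
      have hmem : (-t : ℝ) ∈ Set.Iio lammax := by
        simp only [Set.mem_Iio]; linarith
      have hc1 : (0 : ℝ) ≤ b / (b + t) := by positivity
      have hc2 : (0 : ℝ) ≤ t / (b + t) := by positivity
      have hsum : b / (b + t) + t / (b + t) = 1 := by
        rw [← add_div, div_self (ne_of_gt hbt)]
      have := hconc.2 hmem hbmem hc1 hc2 hsum
      simp only [smul_eq_mul] at this
      have hpt : b / (b + t) * (-t) + t / (b + t) * b = 0 := by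
        field_simp
        ring
      rw [hpt] at this
      have hgb : 0 ≤ t / (b + t) * g b := mul_nonneg hc2 (hg_nn b)
      have h1 : b / (b + t) * g (-t) ≤ q := by rw [hqdef]; linarith
      rw [← le_div_iff₀' (by positivity : 0 < b / (b + t))] at h1
      calc g (-t) ≤ q / (b / (b + t)) := h1
        _ = q * ((b + t) / b) := by rw [div_div_eq_mul_div, mul_div_assoc]
    rcases le_or_gt ((n : ℝ) / ((n : ℝ) + 1)) q with hcase | hcase
    · -- Case 1 : q ≥ n/(n+1)
      have hpt : ∀ t ∈ Set.Ioo (0 : ℝ) b, q ^ n * (1 - t / b) ^ n ≤ (ν (Set.Ioi t)).toReal := by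
        intro t ht
        obtain ⟨ht0, htb⟩ := ht
        have hcont : Continuous (fun s : ℝ => q ^ n * (1 - s / b) ^ n) := by
          exact continuous_const.mul ((continuous_const.sub (continuous_id.div_const b)).pow n)
        have htend : Filter.Tendsto (fun s : ℝ => q ^ n * (1 - s / b) ^ n)
            (nhdsWithin t (Set.Ioi t)) (nhds (q ^ n * (1 - t / b) ^ n)) :=
          (hcont.tendsto t).mono_left nhdsWithin_le_nhds
        refine le_of_tendsto htend ?_
        filter_upwards [Ioo_mem_nhdsGT_of_mem ⟨le_refl t, htb⟩] with s hs
        obtain ⟨hts, hsb⟩ := hs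
        have hs0 : 0 < s := ht0.trans hts
        have h1 : 0 ≤ q * (1 - s / b) := by
          have hsb' : s / b ≤ 1 := by rw [div_le_one hb0]; exact hsb.le
          have : (0 : ℝ) ≤ 1 - s / b := by linarith
          positivity
        calc q ^ n * (1 - s / b) ^ n = (q * (1 - s / b)) ^ n := (mul_pow _ _ _).symm
          _ ≤ g s ^ n := pow_le_pow_left₀ h1 (hchord_pos s hs0 hsb) n
          _ = (ν (Set.Ici s)).toReal := hgpow s
          _ ≤ (ν (Set.Ioi t)).toReal := ENNReal.toReal_mono (measure_ne_top ν _)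
              (measure_mono fun x hx => lt_of_lt_of_le hts hx)
      have hint_poly : IntegrableOn (fun t : ℝ => q ^ n * (1 - t / b) ^ n)
          (Set.Ioo 0 b) volume :=
        ((continuous_const.mul ((continuous_const.sub
          (continuous_id.div_const b)).pow n)).integrableOn_Icc).mono_set Set.Ioo_subset_Icc_self
      have hstep1 : (∫ t in Set.Ioo (0 : ℝ) b, q ^ n * (1 - t / b) ^ n)
          ≤ ∫ t in Set.Ioo (0 : ℝ) b, (ν (Set.Ioi t)).toReal :=
        setIntegral_mono_on hint_poly (hIntP'.mono_set Set.Ioo_subset_Ioi_self)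
          measurableSet_Ioo hpt
      have hstep2 : (∫ t in Set.Ioo (0 : ℝ) b, (ν (Set.Ioi t)).toReal) ≤ P := by
        rw [hPlc]
        exact setIntegral_mono_set hIntP'
          (Filter.Eventually.of_forall fun t => ENNReal.toReal_nonneg)
          (HasSubset.Subset.eventuallyLE Set.Ioo_subset_Ioi_self)
      have hval : (∫ t in Set.Ioo (0 : ℝ) b, q ^ n * (1 - t / b) ^ n)
          = q ^ n * (b / ((n : ℝ) + 1)) := by
        rw [← integral_Ioc_eq_integral_Ioo, ← intervalIntegral.integral_of_le hb0.le]
        have heq : ∀ t : ℝ, q ^ n * (1 - t / b) ^ n = q ^ n / b ^ n * (b - t) ^ n := by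
          intro t
          rw [show (1 : ℝ) - t / b = (b - t) / b by field_simp, div_pow]
          ring
        simp_rw [heq]
        rw [intervalIntegral.integral_const_mul,
          intervalIntegral.integral_comp_sub_left (fun s : ℝ => s ^ n) b]
        simp only [sub_self, sub_zero]
        rw [integral_pow]
        rw [pow_succ]
        field_simp
        ring
      have hq' : ((n : ℝ) / ((n : ℝ) + 1)) ^ n ≤ q ^ n := pow_le_pow_left₀ (by positivity) hcase n
      calc (n : ℝ) ^ n / ((n : ℝ) + 1) ^ (n + 1) * b
          = ((n : ℝ) / ((n : ℝ) + 1)) ^ n * (b / ((n : ℝ) + 1)) := by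
            have hpow_ne : ((n : ℝ) + 1) ^ n ≠ 0 := by positivity
            rw [div_pow, pow_succ]
            field_simp
        _ ≤ q ^ n * (b / ((n : ℝ) + 1)) := mul_le_mul_of_nonneg_right hq' (by positivity)
        _ = ∫ t in Set.Ioo (0 : ℝ) b, q ^ n * (1 - t / b) ^ n := hval.symm
        _ ≤ P := hstep1.trans hstep2
    · -- Case 2 : q < n/(n+1)
      have hq1' : q < 1 := lt_of_lt_of_le hcase (by rw [div_le_one hn1]; linarith)
      set T : ℝ := b / q - b with hTdef
      have hT0 : 0 < T := by
        rw [hTdef, sub_pos, lt_div_iff₀ hq0]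
        nlinarith
      have hpt : ∀ t ∈ Set.Ioo (0 : ℝ) T,
          1 - q ^ n * ((b + t) / b) ^ n ≤ (ν (Set.Iio (-t))).toReal := by
        intro t ht
        obtain ⟨ht0, htT⟩ := ht
        have h1 : g (-t) ≤ q * ((b + t) / b) := hchord_neg t ht0.le
        have h2 : (ν (Set.Ici (-t))).toReal ≤ q ^ n * ((b + t) / b) ^ n := by
          rw [← hgpow (-t), ← mul_pow]
          exact pow_le_pow_left₀ (hg_nn _) h1 n
        have hsplit : (ν (Set.Iio (-t))).toReal + (ν (Set.Ici (-t))).toReal = 1 := by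
          rw [← ENNReal.toReal_add (measure_ne_top ν _) (measure_ne_top ν _),
            ← measure_union (Set.Iio_disjoint_Ici le_rfl) measurableSet_Ici,
            Set.Iio_union_Ici, measure_univ, ENNReal.toReal_one]
        linarith
      have hcont2 : Continuous (fun t : ℝ => 1 - q ^ n * ((b + t) / b) ^ n) :=
        continuous_const.sub (continuous_const.mul
          (((continuous_const.add continuous_id).div_const b).pow n))
      have hint_poly : IntegrableOn (fun t : ℝ => 1 - q ^ n * ((b + t) / b) ^ n)
          (Set.Ioo 0 T) volume :=
        hcont2.integrableOn_Icc.mono_set Set.Ioo_subset_Icc_self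
      have hstep1 : (∫ t in Set.Ioo (0 : ℝ) T, (1 - q ^ n * ((b + t) / b) ^ n))
          ≤ ∫ t in Set.Ioo (0 : ℝ) T, (ν (Set.Iio (-t))).toReal :=
        setIntegral_mono_on hint_poly (hIntN'.mono_set Set.Ioo_subset_Ioi_self)
          measurableSet_Ioo hpt
      have hstep2 : (∫ t in Set.Ioo (0 : ℝ) T, (ν (Set.Iio (-t))).toReal) ≤ P := by
        rw [hPN, hNlc]
        exact setIntegral_mono_set hIntN'
          (Filter.Eventually.of_forall fun t => ENNReal.toReal_nonneg)
          (HasSubset.Subset.eventuallyLE Set.Ioo_subset_Ioi_self)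
      have hbT : b + T = b / q := by rw [hTdef]; ring
      have hval : (∫ t in Set.Ioo (0 : ℝ) T, (1 - q ^ n * ((b + t) / b) ^ n))
          = b / ((n : ℝ) + 1) * ((n : ℝ) / q - ((n : ℝ) + 1) + q ^ n) := by
        rw [← integral_Ioc_eq_integral_Ioo, ← intervalIntegral.integral_of_le hT0.le]
        have heq : ∀ t : ℝ, 1 - q ^ n * ((b + t) / b) ^ n = 1 - q ^ n / b ^ n * (b + t) ^ n := by
          intro t
          rw [div_pow]
          ring
        simp_rw [heq]
        have hii : IntervalIntegrable (fun t : ℝ => q ^ n / b ^ n * (b + t) ^ n) volume 0 T := by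
          apply Continuous.intervalIntegrable
          exact continuous_const.mul ((continuous_const.add continuous_id').pow n)
        rw [intervalIntegral.integral_sub intervalIntegrable_const hii,
          intervalIntegral.integral_const_mul,
          intervalIntegral.integral_comp_add_left (fun s : ℝ => s ^ n) b]
        simp only [add_zero]
        rw [integral_pow, intervalIntegral.integral_const, smul_eq_mul, mul_one, sub_zero,
          hbT, div_pow, hTdef]
        rw [pow_succ, pow_succ]
        field_simp
        ring
      have hks := key_scalar n hn hq0 hcase.le
      have hgoal : (n : ℝ) ^ n / ((n : ℝ) + 1) ^ n ≤ (n : ℝ) / q - ((n : ℝ) + 1) + q ^ n := by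
        linarith
      calc (n : ℝ) ^ n / ((n : ℝ) + 1) ^ (n + 1) * b
          = b / ((n : ℝ) + 1) * ((n : ℝ) ^ n / ((n : ℝ) + 1) ^ n) := by
            rw [pow_succ]; field_simp
        _ ≤ b / ((n : ℝ) + 1) * ((n : ℝ) / q - ((n : ℝ) + 1) + q ^ n) :=
            mul_le_mul_of_nonneg_left hgoal (by positivity)
        _ = ∫ t in Set.Ioo (0 : ℝ) T, (1 - q ^ n * ((b + t) / b) ^ n) := hval.symm
        _ ≤ P := hstep1.trans hstep2

  -- conclude
  constructor
  · rw [habs_eq, ← hPN]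
    set C : ℝ := (n : ℝ) ^ n / ((n : ℝ) + 1) ^ (n + 1) with hCdef
    have hC0 : 0 < C := by
      rw [hCdef]
      have : (0:ℝ) < (n:ℝ) := by linarith
      positivity
    have hgoal : C * lammax ≤ P := by
      by_contra hcon
      push_neg at hcon
      have hb1 : P / C < lammax := by
        rw [div_lt_iff₀ hC0]
        nlinarith
      obtain ⟨b, hb1', hb2⟩ := exists_between hb1
      have hb0 : 0 < b := lt_of_le_of_lt (by positivity) hb1'
      have := key b hb0 hb2
      nlinarith [(div_lt_iff₀ hC0).1 hb1']
    calc 2 * (n : ℝ) ^ n / ((n : ℝ) + 1) ^ (n + 1) * lammax = 2 * (C * lammax) := by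
          rw [hCdef]; ring
      _ ≤ 2 * P := by linarith
      _ = P + P := by ring
  · rw [habs_eq, ← hPN]
    linarith
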